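/- Let $y_1,y_2$ be vectors in Minkowski space with $y_1^2\neq 0$. Then $\det_{y_1,y_2}=y_1^2y_2^2-(y_1y_2)^2=0$ if and only if there exist $\alpha\in\mathbb{R}$ and a lightlike vector $\ell$ with $(\ell y_1)=0$ such that $y_2=\alpha y_1+\ell$. -/

import Mathlib

/-- Minkowski inner product on `ℝ^{1,3}` with signature `(+,-,-,-)`. -/
noncomputable def mink (x y : Fin 4 → ℝ) : ℝ :=
  x 0 * y 0 - x 1 * y 1 - x 2 * y 2 - x 3 * y 3

/-- `2×2` Gram determinant `det_{a,b} = a²b² − (ab)²`. -/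
noncomputable def gram2 (a b : Fin 4 → ℝ) : ℝ := mink a a * mink b b - (mink a b) ^ 2

/-- `3×3` Gram determinant of the Minkowski inner products. -/
noncomputable def gram3 (y1 y2 y3 : Fin 4 → ℝ) : ℝ :=
  mink y1 y1 * mink y2 y2 * mink y3 y3
    - mink y1 y1 * (mink y2 y3) ^ 2 - mink y2 y2 * (mink y1 y3) ^ 2
    - mink y3 y3 * (mink y1 y2) ^ 2
    + 2 * mink y1 y2 * mink y1 y3 * mink y2 y3

/-- Cofactor `Λ_k` of `(y_i y_j)`: `Λ_k = (y_i y_k)(y_j y_k) − y_k²(y_i y_j)`. -/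
noncomputable def Lam (yi yj yk : Fin 4 → ℝ) : ℝ :=
  mink yi yk * mink yj yk - mink yk yk * mink yi yj

lemma mink_comm (x y : Fin 4 → ℝ) : mink x y = mink y x := by simp [mink]; ring

lemma mink_sub_left (x y z : Fin 4 → ℝ) : mink (x - y) z = mink x z - mink y z := by
  simp [mink]; ring

lemma mink_sub_right (x y z : Fin 4 → ℝ) : mink x (y - z) = mink x y - mink x z := by
  simp [mink]; ring

lemma mink_add_right (x y z : Fin 4 → ℝ) : mink x (y + z) = mink x y + mink x z := by
  simp [mink]; ring

lemma mink_smul_left (c : ℝ) (x y : Fin 4 → ℝ) : mink (c • x) y = c * mink x y := by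
  simp [mink]; ring

lemma mink_smul_right (c : ℝ) (x y : Fin 4 → ℝ) : mink x (c • y) = c * mink x y := by
  simp [mink]; ring

/-- If `y1² ≠ 0`, then `det_{y1,y2} = 0` iff `y2 = α y1 + ℓ` for some real `α`
and a lightlike `ℓ` orthogonal to `y1`. -/
theorem gram2_eq_zero_iff (y1 y2 : Fin 4 → ℝ) (h : mink y1 y1 ≠ 0) :
    gram2 y1 y2 = 0 ↔
      ∃ (α : ℝ) (ℓ : Fin 4 → ℝ), mink ℓ ℓ = 0 ∧ mink ℓ y1 = 0 ∧ y2 = α • y1 + ℓ := by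
  constructor
  · intro hg
    set α := mink y1 y2 / mink y1 y1 with hα
    refine ⟨α, y2 - α • y1, ?_, ?_, by abel⟩
    · have e : mink (y2 - α • y1) (y2 - α • y1)
          = mink y2 y2 - α * mink y2 y1 - (α * mink y1 y2 - α * (α * mink y1 y1)) := by
        rw [mink_sub_left, mink_sub_right, mink_sub_right, mink_smul_left,
          mink_smul_right, mink_smul_right, mink_smul_left]
      rw [e, mink_comm y2 y1, hα]
      have hg' : mink y1 y1 * mink y2 y2 - (mink y1 y2) ^ 2 = 0 := hg
      field_simp
      nlinarith [hg']
    · rw [mink_sub_left, mink_smul_left, hα, mink_comm y2 y1]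
      field_simp
      ring
  · rintro ⟨α, ℓ, hll, hl1, rfl⟩
    have h12 : mink y1 (α • y1 + ℓ) = α * mink y1 y1 := by
      rw [mink_add_right, mink_smul_right, mink_comm y1 ℓ, hl1]; ring
    have h22 : mink (α • y1 + ℓ) (α • y1 + ℓ) = α ^ 2 * mink y1 y1 := by
      rw [mink_add_right, mink_smul_right, mink_comm (α • y1 + ℓ) y1, h12,
        mink_comm (α • y1 + ℓ) ℓ, mink_add_right, mink_smul_right, hl1, hll]
      ring
    simp only [gram2, h12, h22]
    ring
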